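/- Quantitative continuity of the normalized ratio: Let μ̂, μ ∈ ℝ^d, let Σ̂, Σ be symmetric d×d matrices with λ_min(Σ̂) ≥ λ₀ > 0 and λ_min(Σ) ≥ λ₀ > 0, and define Q̂(β) = (β⊤μ̂)/√(β⊤Σ̂β) and Q(β) = (β⊤μ)/√(β⊤Σβ) for β with ‖β‖₂ = 1. Then |Q̂(β) − Q(β)| ≤ λ₀^{-1/2} |β⊤(μ̂ − μ)| + (1/2) λ₀^{-3/2} |β⊤μ̂| · |β⊤(Σ̂ − Σ)β|. -/

import Mathlib

open Matrix

lemma quad_lb {d : ℕ} (A : Matrix (Fin d) (Fin d) ℝ) (hA : A.IsHermitian) (lam0 : ℝ)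
    (h : ∀ i, lam0 ≤ hA.eigenvalues i) (β : Fin d → ℝ) :
    lam0 * (β ⬝ᵥ β) ≤ β ⬝ᵥ A.mulVec β := by
  set U : Matrix (Fin d) (Fin d) ℝ := (hA.eigenvectorUnitary : Matrix (Fin d) (Fin d) ℝ)
  have hU : U * star U = 1 := (Matrix.mem_unitaryGroup_iff).mp hA.eigenvectorUnitary.2
  have hU' : U * Uᴴ = 1 := hU
  have hdecomp : A - lam0 • (1 : Matrix (Fin d) (Fin d) ℝ) =
      U * diagonal (fun i => hA.eigenvalues i - lam0) * Uᴴ := by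
    have hs := hA.spectral_theorem
    have hd : (diagonal (fun i => hA.eigenvalues i - lam0) : Matrix (Fin d) (Fin d) ℝ) =
        diagonal (RCLike.ofReal ∘ hA.eigenvalues) - lam0 • (1 : Matrix (Fin d) (Fin d) ℝ) := by
      rw [Matrix.smul_one_eq_diagonal, ← Matrix.diagonal_sub]
      rfl
    rw [hd, Matrix.mul_sub, Matrix.sub_mul, Matrix.mul_smul, Matrix.smul_mul, Matrix.mul_one,
      hU']
    try congr 1
    try exact hs
  have hps : (A - lam0 • (1 : Matrix (Fin d) (Fin d) ℝ)).PosSemidef := by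
    rw [hdecomp]
    exact (Matrix.posSemidef_diagonal_iff.mpr
      (fun i => sub_nonneg.mpr (h i))).mul_mul_conjTranspose_same U
  have := hps.dotProduct_mulVec_nonneg β
  simp only [RCLike.re_to_real, star_trivial] at this
  have heq : β ⬝ᵥ (A - lam0 • (1 : Matrix (Fin d) (Fin d) ℝ)).mulVec β
      = β ⬝ᵥ A.mulVec β - lam0 * (β ⬝ᵥ β) := by
    rw [Matrix.sub_mulVec, dotProduct_sub, Matrix.smul_mulVec, Matrix.one_mulVec,
      dotProduct_smul, smul_eq_mul]
  rw [heq] at this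
  linarith

/-- Quantitative continuity of the normalized ratio: with λ_min(Σ̂), λ_min(Σ) ≥ λ₀ > 0 and
‖β‖₂ = 1, |Q̂(β) − Q(β)| ≤ λ₀^{-1/2}|β⊤(μ̂−μ)| + (1/2)λ₀^{-3/2}|β⊤μ̂||β⊤(Σ̂−Σ)β|. -/
theorem stmt14 {d : ℕ} [NeZero d] (Shat S : Matrix (Fin d) (Fin d) ℝ)
    (hShat : Shat.IsHermitian) (hS : S.IsHermitian)
    (μhat μ : Fin d → ℝ) (lam0 : ℝ) (hlam0 : 0 < lam0)
    (h1 : lam0 ≤ ⨅ i, hShat.eigenvalues i) (h2 : lam0 ≤ ⨅ i, hS.eigenvalues i)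
    (β : Fin d → ℝ) (hβ : β ⬝ᵥ β = 1) :
    |(β ⬝ᵥ μhat) / Real.sqrt (β ⬝ᵥ Shat.mulVec β)
        - (β ⬝ᵥ μ) / Real.sqrt (β ⬝ᵥ S.mulVec β)|
      ≤ (Real.sqrt lam0)⁻¹ * |β ⬝ᵥ (μhat - μ)|
        + (1 / 2) * (lam0 ^ ((3 : ℝ) / 2))⁻¹ * (|β ⬝ᵥ μhat| * |β ⬝ᵥ (Shat - S).mulVec β|) := by
  have hx : lam0 ≤ β ⬝ᵥ Shat.mulVec β := by
    have := quad_lb Shat hShat lam0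
      (fun i => h1.trans (ciInf_le (Finite.bddBelow_range _) i)) β
    rwa [hβ, mul_one] at this
  have hy : lam0 ≤ β ⬝ᵥ S.mulVec β := by
    have := quad_lb S hS lam0
      (fun i => h2.trans (ciInf_le (Finite.bddBelow_range _) i)) β
    rwa [hβ, mul_one] at this
  set a := β ⬝ᵥ μhat
  set b := β ⬝ᵥ μ
  set x := β ⬝ᵥ Shat.mulVec β
  set y := β ⬝ᵥ S.mulVec β
  have hab : β ⬝ᵥ (μhat - μ) = a - b := by simp [a, b, dotProduct_sub]
  have hxy : β ⬝ᵥ (Shat - S).mulVec β = x - y := by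
    simp [x, y, Matrix.sub_mulVec, dotProduct_sub]
  rw [hab, hxy]
  set sl := Real.sqrt lam0 with hsl
  set sx := Real.sqrt x with hsx
  set sy := Real.sqrt y with hsy
  have hsl0 : 0 < sl := Real.sqrt_pos.mpr hlam0
  have hslx : sl ≤ sx := Real.sqrt_le_sqrt hx
  have hsly : sl ≤ sy := Real.sqrt_le_sqrt hy
  have hsx0 : 0 < sx := lt_of_lt_of_le hsl0 hslx
  have hsy0 : 0 < sy := lt_of_lt_of_le hsl0 hsly
  have hsx2 : sx ^ 2 = x := Real.sq_sqrt (hlam0.le.trans hx)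
  have hsy2 : sy ^ 2 = y := Real.sq_sqrt (hlam0.le.trans hy)
  have hpow : lam0 ^ ((3 : ℝ) / 2) = sl ^ 3 := by
    rw [hsl, Real.sqrt_eq_rpow, ← Real.rpow_natCast (lam0 ^ ((1:ℝ)/2)) 3,
      ← Real.rpow_mul hlam0.le]
    norm_num
  rw [hpow]
  -- split
  have key : a / sx - b / sy = (a - b) / sy + a * (1 / sx - 1 / sy) := by
    field_simp
    ring
  rw [key]
  have hT1 : |(a - b) / sy| ≤ sl⁻¹ * |a - b| := by
    rw [abs_div, abs_of_pos hsy0, inv_mul_eq_div]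
    exact div_le_div_of_nonneg_left (abs_nonneg _) hsl0 hsly
  have hdiff : |1 / sx - 1 / sy| ≤ |x - y| / (2 * sl ^ 3) := by
    have h1 : 1 / sx - 1 / sy = (sy - sx) / (sx * sy) := by
      rw [div_sub_div _ _ hsx0.ne' hsy0.ne', one_mul, mul_one]
    have h2 : (sy - sx) * (sy + sx) = y - x := by
      have : (sy - sx) * (sy + sx) = sy ^ 2 - sx ^ 2 := by ring
      rw [this, hsx2, hsy2]
    rw [h1, abs_div, abs_of_pos (mul_pos hsx0 hsy0)]
    rw [div_le_div_iff₀ (mul_pos hsx0 hsy0) (by positivity)]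
    have h3 : |sy - sx| * (sy + sx) = |y - x| := by
      rw [← h2, abs_mul, abs_of_pos (show (0:ℝ) < sy + sx by linarith)]
    have h4 : |y - x| = |x - y| := abs_sub_comm _ _
    calc |sy - sx| * (2 * sl ^ 3) ≤ |sy - sx| * ((sy + sx) * (sx * sy)) := by
          apply mul_le_mul_of_nonneg_left _ (abs_nonneg _)
          have hm : sl * sl ≤ sx * sy := mul_le_mul hslx hsly hsl0.le hsx0.le
          have hsum : 2 * sl ≤ sy + sx := by linarith
          have := mul_le_mul hsum hm (by positivity) (by linarith)
          nlinarith [this]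
      _ = |x - y| * (sx * sy) := by rw [← mul_assoc, h3, h4]
  calc |(a - b) / sy + a * (1 / sx - 1 / sy)|
      ≤ |(a - b) / sy| + |a * (1 / sx - 1 / sy)| := abs_add_le _ _
    _ ≤ sl⁻¹ * |a - b| + |a| * (|x - y| / (2 * sl ^ 3)) := by
        refine add_le_add hT1 ?_
        rw [abs_mul]
        exact mul_le_mul_of_nonneg_left hdiff (abs_nonneg _)
    _ = sl⁻¹ * |a - b| + 1 / 2 * (sl ^ 3)⁻¹ * (|a| * |x - y|) := by
        ring
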